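/- arXiv:1507.05003 — 5 statements merged into one kernel-verified Lean document; each statement's English description precedes it below -/
import Mathlib

section
/- There exist constants C > 0 and δ > 0 such that for all w ∈ ℂ with 0 < |w - 1| < δ and 1 - 3w + 3w² ≠ 0, one has |G(w) + 1/9 - (1/3)·Re(-((1-w)/w)³)| ≤ C·|w - 1|⁴, where G(w) = (1/3)·log|w³/(1 - 3w + 3w²)| - 1/9. -/
lemma one_add_abs_lower (x : ℂ) : 1 - ‖x‖ ≤ ‖1 + x‖ := by
  have h := norm_sub_norm_le (1:ℂ) (-x)
  simp only [map_one, map_neg, sub_neg_eq_add] at h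
  simpa using h

/-- |G(w) + 1/9 - (1/3)·Re(-((1-w)/w)³)| ≤ C·|w - 1|⁴ near w = 1. -/
theorem stmt_5 :
    ∃ C > (0:ℝ), ∃ δ > (0:ℝ), ∀ w : ℂ,
      0 < ‖w - 1‖ → ‖w - 1‖ < δ →
      1 - 3*w + 3*w^2 ≠ 0 →
      |((1/3) * Real.log ‖w^3 / (1 - 3*w + 3*w^2)‖ - 1/9) + 1/9
          - (1/3) * (-(((1 - w)/w)^3)).re|
        ≤ C * ‖w - 1‖^4 := by
  refine ⟨4, by norm_num, 1/10, by norm_num, ?_⟩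
  intro w hpos hlt hden
  set u : ℂ := w - 1 with hu
  set d : ℂ := 1 - 3*w + 3*w^2 with hd
  have hdu : d = 1 + 3*u + 3*u^2 := by rw [hd, hu]; ring
  set a : ℝ := ‖u‖ with ha
  have ha1 : a < 1/10 := hlt
  have ha0 : 0 ≤ a := norm_nonneg u
  have hwabs : (9:ℝ)/10 ≤ ‖w‖ := by
    have h2 : w = 1 + u := by rw [hu]; ring
    have := one_add_abs_lower u
    rw [← h2] at this
    linarith
  have hw0 : w ≠ 0 := by
    intro h
    rw [h] at hwabs; simp at hwabs; linarith
  have hdabs : (1:ℝ)/2 ≤ ‖d‖ := by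
    have h1 : ‖3*u + 3*u^2‖ ≤ 3*a + 3*a^2 := by
      calc ‖3*u + 3*u^2‖ ≤ ‖3*u‖ + ‖3*u^2‖ :=
            norm_add_le _ _
        _ = 3*a + 3*a^2 := by simp [map_mul, map_pow, ha]
    have h2 : d = 1 + (3*u + 3*u^2) := by rw [hdu]; ring
    have h3 := one_add_abs_lower (3*u + 3*u^2)
    rw [← h2] at h3
    nlinarith [sq_nonneg a]
  set z : ℂ := u^3 / d with hz
  have hzabs : ‖z‖ ≤ 2 * a^3 := by
    rw [hz, norm_div, norm_pow, ← ha]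
    rw [div_le_iff₀ (by linarith : (0:ℝ) < ‖d‖)]
    nlinarith [pow_nonneg ha0 3]
  have hzsmall : ‖z‖ < 1/2 := by
    have : a^3 < (1/10)^3 := by
      apply pow_lt_pow_left₀ ha1 ha0
      norm_num
    nlinarith
  have hratio : w^3 / d = 1 + z := by
    rw [hz]
    field_simp
    rw [hdu, hu]; ring
  have hlog : Real.log (‖w^3 / d‖) = (Complex.log (1 + z)).re := by
    rw [hratio, Complex.log_re]
  have hre : -(((1 - w)/w)^3) = u^3 / w^3 := by
    rw [hu]; field_simp; ring
  have key : ‖Complex.log (1 + z) - u^3 / w^3‖ ≤ 12 * a^6 := by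
    have h1 : ‖Complex.log (1 + z) - z‖ ≤ 8 * a^6 := by
      have hb := Complex.norm_log_one_add_sub_self_le (by
        linarith : ‖z‖ < 1)
      have h2 : ‖z‖ ^ 2 * (1 - ‖z‖)⁻¹ / 2 ≤ 8 * a^6 := by
        have hinv : (1 - ‖z‖)⁻¹ ≤ 2 := by
          rw [inv_le_comm₀ (by linarith) (by norm_num)]
          linarith
        have hsq : ‖z‖ ^ 2 ≤ 4 * a^6 := by
          nlinarith [norm_nonneg z]
        nlinarith [norm_nonneg z, sq_nonneg (‖z‖)]
      linarith
    have h2 : ‖z - u^3 / w^3‖ ≤ 4 * a^6 := by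
      have heq : z - u^3 / w^3 = u^6 / (d * w^3) := by
        rw [hz]
        have hw3 : w^3 ≠ 0 := pow_ne_zero 3 hw0
        field_simp
        rw [hdu, hu]; ring
      rw [heq, norm_div, norm_pow, norm_mul, norm_pow, ← ha]
      rw [div_le_iff₀ (by positivity : (0:ℝ) < ‖d‖ * ‖w‖ ^ 3)]
      have hw3 : (9/10:ℝ)^3 ≤ ‖w‖ ^ 3 :=
        pow_le_pow_left₀ (by norm_num) hwabs 3
      have hprod : (1/2:ℝ) * ((9/10:ℝ)^3) ≤ ‖d‖ * ‖w‖ ^ 3 := by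
        apply mul_le_mul hdabs hw3 (by norm_num) (by linarith)
      nlinarith [pow_nonneg ha0 6]
    calc ‖Complex.log (1 + z) - u^3 / w^3‖
        = ‖(Complex.log (1 + z) - z) + (z - u^3 / w^3)‖ := by ring_nf
      _ ≤ ‖Complex.log (1 + z) - z‖ + ‖z - u^3 / w^3‖ :=
          norm_add_le _ _
      _ ≤ 12 * a^6 := by linarith
  have hgoal : |((1/3) * Real.log (‖w^3 / d‖) - 1/9) + 1/9
      - (1/3) * (-(((1 - w)/w)^3)).re| ≤ 4 * a^6 := by
    rw [hlog, hre]
    have heq2 : ((1/3) * (Complex.log (1 + z)).re - 1/9) + 1/9 - (1/3) * (u^3 / w^3).re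
        = (1/3) * ((Complex.log (1 + z) - u^3 / w^3).re) := by
      simp [Complex.sub_re]; ring
    rw [heq2, abs_mul]
    have habs : |(Complex.log (1 + z) - u^3 / w^3).re| ≤ 12 * a^6 :=
      le_trans (Complex.abs_re_le_norm _) key
    rw [abs_of_pos (by norm_num : (0:ℝ) < 1/3)]
    linarith
  have ha6 : a^6 ≤ a^4 := by
    have h2 : a^2 ≤ 1 := by nlinarith
    nlinarith [pow_nonneg ha0 4]
  calc |((1/3) * Real.log (‖w^3 / d‖) - 1/9) + 1/9
      - (1/3) * (-(((1 - w)/w)^3)).re| ≤ 4 * a^6 := hgoal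
    _ ≤ 4 * a^4 := by linarith
end

section
/- There exist constants C > 0 and δ > 0 such that for all w ∈ ℂ with |w - 1| < δ, |G(w) + 1/9| ≤ C·|w - 1|³, where G(w) = (1/3)·log|w³/(1 - 3w + 3w²)| - 1/9. In other words, G(w) - G(1) = O(|w-1|³) near w = 1. -/
lemma log_abs_bound (t : ℝ) (ht : 0 < t) (h : |t - 1| ≤ 1/2) :
    |Real.log t| ≤ 2 * |t - 1| := by
  have ht2 : (1:ℝ)/2 ≤ t := by
    have := abs_le.mp h
    linarith [this.1]
  rw [abs_le]
  constructor
  · have h1 : Real.log t⁻¹ ≤ t⁻¹ - 1 := Real.log_le_sub_one_of_pos (by positivity)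
    rw [Real.log_inv] at h1
    have h2 : t⁻¹ - 1 = (1 - t) / t := by field_simp
    have h3 : (1 - t) / t ≤ 2 * |t - 1| := by
      rw [div_le_iff₀ ht]
      calc 1 - t ≤ |t - 1| := by rw [abs_sub_comm]; exact le_abs_self _
        _ = 2 * |t - 1| * (1/2) := by ring
        _ ≤ 2 * |t - 1| * t := by
            apply mul_le_mul_of_nonneg_left ht2 (by positivity)
    nlinarith [h1, h2.symm ▸ h3]
  · calc Real.log t ≤ t - 1 := Real.log_le_sub_one_of_pos ht
      _ ≤ |t - 1| := le_abs_self _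
      _ ≤ 2 * |t - 1| := by nlinarith [abs_nonneg (t-1)]

/-- |G(w) + 1/9| ≤ C·|w - 1|³ near w = 1, i.e. G(w) - G(1) = O(|w-1|³). -/
theorem stmt_6 :
    ∃ C > (0:ℝ), ∃ δ > (0:ℝ), ∀ w : ℂ, ‖w - 1‖ < δ →
      |((1/3) * Real.log (‖w^3 / (1 - 3*w + 3*w^2)‖) - 1/9) + 1/9|
        ≤ C * ‖w - 1‖^3 := by
  refine ⟨2, by norm_num, 1/8, by norm_num, fun w hw => ?_⟩
  set u : ℂ := w - 1 with hu
  have hu8 : ‖u‖ < 1/8 := hw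
  have hua := norm_nonneg u
  -- denominator bound
  have hden : (1 - 3*w + 3*w^2 : ℂ) = 1 + (3*u + 3*u^2) := by rw [hu]; ring
  have habs3 : ‖3*u + 3*u^2‖ ≤ 1/2 := by
    calc ‖3*u + 3*u^2‖ ≤ ‖3*u‖ + ‖3*u^2‖ :=
          norm_add_le _ _
      _ = 3 * ‖u‖ + 3 * (‖u‖)^2 := by
          simp [map_mul, map_pow, norm_mul, norm_pow]
      _ ≤ 3 * (1/8) + 3 * (1/8)^2 := by nlinarith
      _ ≤ 1/2 := by norm_num
  have hdlb : (1:ℝ)/2 ≤ ‖1 - 3*w + 3*w^2‖ := by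
    rw [hden]
    have h1 : ‖(1:ℂ)‖ ≤ ‖1 + (3*u + 3*u^2)‖ + ‖3*u + 3*u^2‖ := by
      have h := norm_add_le (1 + (3*u + 3*u^2)) (-(3*u + 3*u^2))
      have e1 : (1 + (3*u + 3*u^2)) + (-(3*u + 3*u^2)) = (1:ℂ) := by ring
      rw [e1, norm_neg] at h
      exact h
    simp only [norm_one] at h1
    linarith
  have hdne : (1 - 3*w + 3*w^2 : ℂ) ≠ 0 := by
    intro h0
    rw [h0, norm_zero] at hdlb; linarith
  -- z - 1 = u^3 / denom
  set z : ℂ := w^3 / (1 - 3*w + 3*w^2) with hz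
  have hz1 : z - 1 = u^3 / (1 - 3*w + 3*w^2) := by
    rw [hz, hu]
    rw [eq_div_iff hdne, sub_mul, div_mul_cancel₀ _ hdne]
    ring
  have hz1abs : ‖z - 1‖ ≤ 2 * (‖u‖)^3 := by
    rw [hz1, norm_div, norm_pow]
    rw [div_le_iff₀ (by linarith)]
    nlinarith [mul_le_mul_of_nonneg_left hdlb (pow_nonneg hua 3)]
  have hu3 : (‖u‖)^3 ≤ (1/8)^3 :=
    pow_le_pow_left₀ hua (le_of_lt hu8) 3
  have hz1half : ‖z - 1‖ ≤ 1/2 := by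
    calc ‖z - 1‖ ≤ 2 * (‖u‖)^3 := hz1abs
      _ ≤ 2 * (1/8)^3 := by linarith
      _ ≤ 1/2 := by norm_num
  -- |z| > 0
  have hzpos : 0 < ‖z‖ := by
    have : z ≠ 0 := by
      intro h0
      rw [h0] at hz1half
      simp at hz1half
      norm_num at hz1half
    exact norm_pos_iff.mpr this
  have htri : |‖z‖ - 1| ≤ ‖z - 1‖ := by
    have := abs_norm_sub_norm_le z 1
    simpa using this
  have hlog : |Real.log (‖z‖)| ≤ 2 * |‖z‖ - 1| :=
    log_abs_bound _ hzpos (le_trans htri hz1half)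
  have hfinal : |Real.log (‖z‖)| ≤ 4 * (‖u‖)^3 := by
    calc |Real.log (‖z‖)| ≤ 2 * |‖z‖ - 1| := hlog
      _ ≤ 2 * ‖z - 1‖ := by linarith
      _ ≤ 2 * (2 * (‖u‖)^3) := by linarith
      _ = 4 * (‖u‖)^3 := by ring
  have : ((1:ℝ)/3) * Real.log (‖z‖) - 1/9 + 1/9
      = (1/3) * Real.log (‖z‖) := by ring
  rw [this, abs_mul]
  have h13 : |(1:ℝ)/3| = 1/3 := by norm_num
  rw [h13]
  calc (1/3) * |Real.log (‖z‖)| ≤ (1/3) * (4 * (‖u‖)^3) := by linarith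
    _ ≤ 2 * ‖w - 1‖^3 := by rw [← hu]; nlinarith [pow_nonneg hua 3]
end

section
/- The gradient of G vanishes at w = 1: writing G(w) = (1/3)·log|w³/(1 - 3w + 3w²)| - 1/9, both first-order partial derivatives of G (as a function of the real coordinates of w) vanish at w = 1, and moreover all second-order partial derivatives of G vanish at w = 1. -/
/-- G as a function of the real coordinates (x, y) of w = x + iy. -/
noncomputable def Gr : ℝ × ℝ → ℝ := fun p =>
  (1/3) * Real.log (‖
    ((p.1 + p.2 * Complex.I)^3 /
      (1 - 3*(p.1 + p.2 * Complex.I) + 3*(p.1 + p.2 * Complex.I)^2))‖) - 1/9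

namespace Stmt7Aux

noncomputable def Af : ℝ × ℝ → ℝ := fun p => p.1 * p.1 + p.2 * p.2
noncomputable def Uf : ℝ × ℝ → ℝ := fun p => 1 - 3 * p.1 + 3 * (p.1 * p.1) - 3 * (p.2 * p.2)
noncomputable def Vf : ℝ × ℝ → ℝ := fun p => 6 * (p.1 * p.2) - 3 * p.2
noncomputable def Bf : ℝ × ℝ → ℝ := fun p => Uf p * Uf p + Vf p * Vf p

noncomputable def Gr2 : ℝ × ℝ → ℝ := fun p =>
  (1/2) * Real.log (Af p) - (1/6) * Real.log (Bf p) - 1/9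

/-- x-component of the gradient of `Gr2`. -/
noncomputable def af : ℝ × ℝ → ℝ := fun p =>
  p.1 * (Af p)⁻¹ - (1/6) * ((2 * Uf p * (6 * p.1 - 3) + 2 * Vf p * (6 * p.2)) * (Bf p)⁻¹)

/-- y-component of the gradient of `Gr2`. -/
noncomputable def bf : ℝ × ℝ → ℝ := fun p =>
  p.2 * (Af p)⁻¹ - (1/6) * ((2 * Uf p * (-(6 * p.2)) + 2 * Vf p * (6 * p.1 - 3)) * (Bf p)⁻¹)

noncomputable def e1 : ℝ × ℝ →L[ℝ] ℝ := ContinuousLinearMap.fst ℝ ℝ ℝ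
noncomputable def e2 : ℝ × ℝ →L[ℝ] ℝ := ContinuousLinearMap.snd ℝ ℝ ℝ

noncomputable def F : ℝ × ℝ → (ℝ × ℝ →L[ℝ] ℝ) := fun p => af p • e1 + bf p • e2

def S : Set (ℝ × ℝ) := {p | Af p ≠ 0 ∧ Bf p ≠ 0}

lemma hS_open : IsOpen S := by
  have hA : Continuous Af := by unfold Af; fun_prop
  have hB : Continuous Bf := by unfold Bf Uf Vf; fun_prop
  exact (isOpen_compl_singleton.preimage hA).inter (isOpen_compl_singleton.preimage hB)

lemma h10 : (1, 0) ∈ S := by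
  constructor <;> norm_num [Af, Bf, Uf, Vf]

/-- On S, Gr coincides with Gr2. -/
lemma key : ∀ p ∈ S, Gr p = Gr2 p := by
  rintro p ⟨hA, hB⟩
  set w : ℂ := (p.1 : ℂ) + p.2 * Complex.I with hw
  set q : ℂ := 1 - 3 * w + 3 * w ^ 2 with hq
  have hnw : Complex.normSq w = Af p := by
    simp [hw, Complex.normSq_apply, Af]
  have hnq : Complex.normSq q = Bf p := by
    simp [hq, hw, Complex.normSq_apply, Bf, Uf, Vf, Complex.add_re, Complex.add_im,
      Complex.mul_re, Complex.mul_im, Complex.ofReal_re, Complex.ofReal_im, pow_two]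
    ring
  have hw0 : w ≠ 0 := by
    intro h; apply hA; rw [← hnw, h]; simp
  have hq0 : q ≠ 0 := by
    intro h; apply hB; rw [← hnq, h]; simp
  have hAnn : 0 < Complex.normSq w := Complex.normSq_pos.2 hw0
  have hBnn : 0 < Complex.normSq q := Complex.normSq_pos.2 hq0
  have habs : ∀ z : ℂ, z ≠ 0 → Real.log ‖z‖ = (1/2) * Real.log (Complex.normSq z) := by
    intro z hz
    rw [Complex.norm_def, Real.log_sqrt (Complex.normSq_nonneg z)]
    ring
  have : Gr p = (1/3) * Real.log ‖w ^ 3 / q‖ - 1/9 := rfl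
  rw [this, habs _ (div_ne_zero (pow_ne_zero 3 hw0) hq0)]
  rw [map_div₀ Complex.normSq, map_pow Complex.normSq]
  rw [Real.log_div (pow_ne_zero 3 (ne_of_gt hAnn)) (ne_of_gt hBnn), Real.log_pow]
  rw [hnw, hnq]
  unfold Gr2
  ring

/-- inverse composition helper -/
lemma hinv {f : ℝ × ℝ → ℝ} {f' : ℝ × ℝ →L[ℝ] ℝ} {x : ℝ × ℝ}
    (hf : HasFDerivAt f f' x) (hx : f x ≠ 0) :
    HasFDerivAt (fun p => (f p)⁻¹) ((-((f x) ^ 2)⁻¹) • f') x :=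
  (hasDerivAt_inv hx).comp_hasFDerivAt x hf

lemma hfst {x : ℝ × ℝ} : HasFDerivAt (fun p : ℝ × ℝ => p.1) e1 x := hasFDerivAt_fst
lemma hsnd {x : ℝ × ℝ} : HasFDerivAt (fun p : ℝ × ℝ => p.2) e2 x := hasFDerivAt_snd

lemma hAf (x : ℝ × ℝ) :
    HasFDerivAt Af ((2 * x.1) • e1 + (2 * x.2) • e2) x := by
  have h := ((hfst (x := x)).mul hfst).add (hsnd.mul hsnd)
  refine h.congr_fderiv ?_
  ext q <;> simp <;> ring

lemma hUf (x : ℝ × ℝ) :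
    HasFDerivAt Uf ((-3 + 6 * x.1) • e1 + (-(6 * x.2)) • e2) x := by
  have h := (((hasFDerivAt_const (1:ℝ) x).sub (hfst.const_mul 3)).add
      ((hfst.mul hfst).const_mul 3)).sub ((hsnd.mul hsnd).const_mul 3)
  refine h.congr_fderiv ?_
  ext q <;> simp <;> ring

lemma hVf (x : ℝ × ℝ) :
    HasFDerivAt Vf ((6 * x.2) • e1 + (6 * x.1 - 3) • e2) x := by
  have h := (((hfst (x := x)).mul hsnd).const_mul 6).sub (hsnd.const_mul 3)
  refine h.congr_fderiv ?_
  ext q <;> simp <;> ring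

lemma hBf (x : ℝ × ℝ) :
    HasFDerivAt Bf ((2 * Uf x * (-3 + 6 * x.1) + 2 * Vf x * (6 * x.2)) • e1 +
      (2 * Uf x * (-(6 * x.2)) + 2 * Vf x * (6 * x.1 - 3)) • e2) x := by
  have h := ((hUf x).mul (hUf x)).add ((hVf x).mul (hVf x))
  refine h.congr_fderiv ?_
  ext q <;> simp <;> ring

lemma hGr2 (x : ℝ × ℝ) (hx : x ∈ S) : HasFDerivAt Gr2 (F x) x := by
  obtain ⟨hA, hB⟩ := hx
  have h := ((((hAf x).log hA).const_mul (1/2:ℝ)).sub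
      (((hBf x).log hB).const_mul (1/6:ℝ))).sub_const (1/9 : ℝ)
  refine h.congr_fderiv ?_
  ext q <;> · simp [F, af, bf, e1, e2]; ring

lemma haf0 : HasFDerivAt af (0 : ℝ × ℝ →L[ℝ] ℝ) (1, 0) := by
  have hAne : Af (1, 0) ≠ 0 := h10.1
  have hBne : Bf (1, 0) ≠ 0 := h10.2
  have h1 := (hfst (x := ((1:ℝ),(0:ℝ)))).mul (hinv (hAf (1, 0)) hAne)
  have h2 := ((hUf (1, 0)).const_mul 2).mul (((hfst (x := ((1:ℝ),(0:ℝ)))).const_mul 6).sub_const 3)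
  have h3 := ((hVf (1, 0)).const_mul 2).mul ((hsnd (x := ((1:ℝ),(0:ℝ)))).const_mul 6)
  have h := h1.sub (((h2.add h3).mul (hinv (hBf (1, 0)) hBne)).const_mul (1/6 : ℝ))
  refine h.congr_fderiv ?_
  ext q <;> simp [af, Af, Bf, Uf, Vf, e1, e2] <;> norm_num

lemma hbf0 : HasFDerivAt bf (0 : ℝ × ℝ →L[ℝ] ℝ) (1, 0) := by
  have hAne : Af (1, 0) ≠ 0 := h10.1
  have hBne : Bf (1, 0) ≠ 0 := h10.2
  have h1 := (hsnd (x := ((1:ℝ),(0:ℝ)))).mul (hinv (hAf (1, 0)) hAne)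
  have h2 := ((hUf (1, 0)).const_mul 2).mul (((hsnd (x := ((1:ℝ),(0:ℝ)))).const_mul 6).neg)
  have h3 := ((hVf (1, 0)).const_mul 2).mul (((hfst (x := ((1:ℝ),(0:ℝ)))).const_mul 6).sub_const 3)
  have h := h1.sub (((h2.add h3).mul (hinv (hBf (1, 0)) hBne)).const_mul (1/6 : ℝ))
  refine h.congr_fderiv ?_
  ext q <;> simp [bf, Af, Bf, Uf, Vf, e1, e2] <;> norm_num

lemma hF0 : HasFDerivAt F (0 : ℝ × ℝ →L[ℝ] (ℝ × ℝ →L[ℝ] ℝ)) (1, 0) := by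
  have h := (haf0.smul_const e1).add (hbf0.smul_const e2)
  refine h.congr_fderiv ?_
  ext q <;> simp

end Stmt7Aux

open Stmt7Aux in
/-- all first- and second-order partial derivatives of G vanish at w = 1. -/
theorem stmt_7 :
    fderiv ℝ Gr (1, 0) = 0 ∧ fderiv ℝ (fderiv ℝ Gr) (1, 0) = 0 := by
  have hmem : S ∈ nhds ((1 : ℝ), (0 : ℝ)) := hS_open.mem_nhds h10
  have hEq : Gr =ᶠ[nhds ((1 : ℝ), (0 : ℝ))] Gr2 := Filter.eventuallyEq_of_mem hmem key
  constructor
  · rw [hEq.fderiv_eq, (hGr2 _ h10).fderiv]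
    ext q <;> simp [F, af, bf, Af, Bf, Uf, Vf, e1, e2] <;> norm_num
  · have hd : ∀ p ∈ S, fderiv ℝ Gr p = F p := by
      intro p hp
      have h1 : Gr =ᶠ[nhds p] Gr2 := Filter.eventuallyEq_of_mem (hS_open.mem_nhds hp) key
      rw [h1.fderiv_eq, (hGr2 p hp).fderiv]
    have hdEq : fderiv ℝ Gr =ᶠ[nhds ((1 : ℝ), (0 : ℝ))] F :=
      Filter.eventuallyEq_of_mem hmem hd
    rw [hdEq.fderiv_eq, hF0.fderiv]
end

section
/- There exists ε₀ > 0 such that for all 0 < ε < ε₀ and all w in the sector S_ε = {w = 1 + r·e^{iθ} : 0 < r < ε^{1/3}/2, 11π/12 < θ < 13π/12}, one has -ε < G(w) - G(1) < 0, where G(w) = (1/3)·log|w³/(1 - 3w + 3w²)| - 1/9 and G(1) = -1/9. -/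
set_option maxHeartbeats 1000000 in
open Real in
/-- there is ε₀ > 0 such that for 0 < ε < ε₀, every point
    w = 1 + r·e^{iθ} of the sector S_ε (0 < r < ε^{1/3}/2, 11π/12 < θ < 13π/12)
    satisfies -ε < G(w) - G(1) < 0. -/
theorem stmt_10 :
    ∃ ε₀ > (0:ℝ), ∀ ε : ℝ, 0 < ε → ε < ε₀ →
      ∀ r θ : ℝ, 0 < r → r < ε ^ ((1:ℝ)/3) / 2 →
        11*π/12 < θ → θ < 13*π/12 →
        -ε < ((1/3) * Real.log (‖
              ((1 + r * Complex.exp (θ * Complex.I))^3 /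
                (1 - 3*(1 + r * Complex.exp (θ * Complex.I))
                  + 3*(1 + r * Complex.exp (θ * Complex.I))^2))‖) - 1/9)
            - (-1/9) ∧
          ((1/3) * Real.log (‖
              ((1 + r * Complex.exp (θ * Complex.I))^3 /
                (1 - 3*(1 + r * Complex.exp (θ * Complex.I))
                  + 3*(1 + r * Complex.exp (θ * Complex.I))^2))‖) - 1/9)
            - (-1/9) < 0 := by
  refine ⟨1/1000, by norm_num, ?_⟩
  intro ε hε hε' r θ hr hrε hθ1 hθ2
  set z : ℂ := (r : ℂ) * Complex.exp (θ * Complex.I) with hz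
  set c : ℝ := Real.cos θ with hc
  set s : ℝ := Real.sin θ with hs
  -- cube bound on r
  have hr3 : 8 * r ^ 3 < ε := by
    have h2r : 2 * r < ε ^ ((1:ℝ)/3) := by linarith
    have hcube : (ε ^ ((1:ℝ)/3)) ^ (3:ℕ) = ε := by
      rw [← Real.rpow_natCast (ε ^ ((1:ℝ)/3)) 3, ← Real.rpow_mul hε.le]
      norm_num
    calc 8 * r ^ 3 = (2*r)^3 := by ring
    _ < (ε ^ ((1:ℝ)/3)) ^ (3:ℕ) := by
        exact pow_lt_pow_left₀ h2r (by linarith) (by norm_num)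
    _ = ε := hcube
  have hr20 : r < 1/20 := by
    have : r ^ 3 < (1/20:ℝ)^3 := by nlinarith
    exact lt_of_pow_lt_pow_left₀ 3 (by norm_num) this
  -- cosine bound
  have hπ1 : (3.141592:ℝ) < π := by have := Real.pi_gt_d6; linarith
  have hπ2 : π < (3.141593:ℝ) := by have := Real.pi_lt_d6; linarith
  have hcb : c ≤ -9/10 := by
    have h1 : Real.cos (θ - π) ≥ 1 - (θ - π)^2/2 := Real.one_sub_sq_div_two_le_cos
    have h2 : (θ - π)^2 ≤ (π/12)^2 := by
      have habs : |θ - π| ≤ π/12 := by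
        rw [abs_le]; constructor <;> [linarith; linarith]
      calc (θ-π)^2 = |θ-π|^2 := by rw [sq_abs]
      _ ≤ (π/12)^2 := by gcongr
    have h3 : Real.cos (θ - π) ≥ 9/10 := by nlinarith
    have h4 : Real.cos ((θ - π) + π) = -Real.cos (θ - π) := Real.cos_add_pi _
    rw [show (θ - π) + π = θ by ring] at h4
    rw [hc, h4]; linarith
  have hc1 : -1 ≤ c := Real.neg_one_le_cos θ
  have hsc : s^2 + c^2 = 1 := Real.sin_sq_add_cos_sq θ
  -- z real/imag parts
  have hre : z.re = r * c := by
    simp [hz, Complex.exp_mul_I, Complex.mul_re, Complex.cos_ofReal_re, hc]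
  have him : z.im = r * s := by
    simp [hz, Complex.exp_mul_I, Complex.mul_im, Complex.sin_ofReal_re, hs]
  have habsz : ‖z‖ = r := by
    simp [hz, Complex.norm_exp, abs_of_pos hr]
  -- denominator
  set D : ℂ := 1 + 3*z + 3*z^2 with hD
  have hden : (1 - 3*(1 + z) + 3*(1 + z)^2) = D := by rw [hD]; ring
  have hnsD : Complex.normSq D = (1 + 3*(r*c) + 3*((r*c)^2 - (r*s)^2))^2
      + (3*(r*s) + 6*(r*c)*(r*s))^2 := by
    simp [hD, Complex.normSq_apply, Complex.add_re, Complex.add_im, Complex.mul_re,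
      Complex.mul_im, pow_two, hre, him]
    ring
  have hnsN : Complex.normSq ((1 + z)^3) = ((1 + r*c)^2 + (r*s)^2)^3 := by
    rw [map_pow]
    simp [Complex.normSq_apply, Complex.add_re, Complex.add_im, hre, him]
    ring
  -- lower bound on |D|
  have habsD : (1:ℝ) - 3*r - 3*r^2 ≤ ‖D‖ := by
    have e1 : ‖3*z‖ = 3*r := by
      rw [norm_mul, habsz]; norm_num
    have e2 : ‖3*z^2‖ = 3*r^2 := by
      rw [norm_mul, norm_pow, habsz]; norm_num
    have h1 : ‖3*z + 3*z^2‖ ≤ 3*r + 3*r^2 := by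
      calc ‖3*z + 3*z^2‖ ≤ ‖3*z‖ + ‖3*z^2‖ :=
            norm_add_le _ _
      _ = 3*r + 3*r^2 := by rw [e1, e2]
    have hD1 : D - (3*z + 3*z^2) = 1 := by rw [hD]; ring
    have h2 : ‖(1:ℂ)‖ ≤ ‖D‖ + ‖3*z + 3*z^2‖ := by
      calc ‖(1:ℂ)‖ = ‖D + -(3*z + 3*z^2)‖ := by
            rw [show D + -(3*z + 3*z^2) = 1 by rw [hD]; ring]
      _ ≤ ‖D‖ + ‖-(3*z + 3*z^2)‖ := norm_add_le _ _
      _ = ‖D‖ + ‖3*z + 3*z^2‖ := by rw [norm_neg]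
    simp only [norm_one] at h2; linarith
  have habsD2 : (1:ℝ)/2 ≤ ‖D‖ := by nlinarith
  have hDne : D ≠ 0 := by
    intro h; rw [h] at habsD2; simp at habsD2; linarith
  -- key polynomial inequality: normSq N < normSq D
  have key : Complex.normSq ((1+z)^3) < Complex.normSq D := by
    rw [hnsN, hnsD]
    have hg : 0 < 6*c - 8*c^3 - 6*r*(2*c^2-1) - 6*r^2*c - r^3 := by
      nlinarith [mul_nonneg (neg_nonneg.2 (by linarith : c + 9/10 ≤ 0))
        (by nlinarith : (0:ℝ) ≤ 8*c^2 - 36/5*c + 12/25), sq_nonneg r, sq_nonneg c,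
        mul_pos hr hr]
    have hfac : (1 + 3*(r*c) + 3*((r*c)^2 - (r*s)^2))^2 + (3*(r*s) + 6*(r*c)*(r*s))^2
        - ((1 + r*c)^2 + (r*s)^2)^3
        = r^3 * (6*c - 8*c^3 - 6*r*(2*c^2-1) - 6*r^2*c - r^3) := by
      linear_combination (6*r^3*c + 6*r^4 + 6*r^4*s^2 - 6*r^4*c^2 - 6*r^5*c
        - 6*r^5*c*s^2 - 6*r^5*c^3 - r^6 - r^6*s^2 - r^6*s^4 - r^6*c^2
        - 2*r^6*c^2*s^2 - r^6*c^4) * hsc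
    nlinarith [mul_pos (mul_pos (mul_pos hr hr) hr) hg]
  -- |N| < |D|
  have habsND : ‖(1+z)^3‖ < ‖D‖ := by
    rw [Complex.norm_def, Complex.norm_def]
    exact Real.sqrt_lt_sqrt (Complex.normSq_nonneg _) key
  set A : ℝ := ‖(1 + z)^3 / D‖ with hA
  have hAeq : A = ‖(1+z)^3‖ / ‖D‖ := by rw [hA, norm_div]
  have hDpos : 0 < ‖D‖ := by linarith
  have hAlt1 : A < 1 := by
    rw [hAeq, div_lt_one hDpos]; exact habsND
  -- lower bound on |N|
  have habsN : ‖D‖ - r^3 ≤ ‖(1+z)^3‖ := by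
    have h1 : ‖D‖ ≤ ‖(1+z)^3‖ + ‖z^3‖ := by
      calc ‖D‖ = ‖(1+z)^3 + -(z^3)‖ := by
            rw [show (1+z)^3 + -(z^3) = D by rw [hD]; ring]
      _ ≤ ‖(1+z)^3‖ + ‖-(z^3)‖ := norm_add_le _ _
      _ = ‖(1+z)^3‖ + ‖z^3‖ := by rw [norm_neg]
    have h2 : ‖z^3‖ = r^3 := by rw [norm_pow, habsz]
    linarith
  have hAgt : 1 - ε/4 < A := by
    rw [hAeq]
    rw [lt_div_iff₀ hDpos]
    have : r^3 < ε/4 * (1/2) := by linarith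
    nlinarith [habsD2, habsN]
  have hApos : 0 < A := by linarith
  -- log bounds
  have hlogneg : Real.log A < 0 := Real.log_neg hApos hAlt1
  have hlogd : -(3*ε) < Real.log A := by
    refine (Real.lt_log_iff_exp_lt hApos).2 ?_
    have h1 : Real.exp (-(3*ε)) ≤ (1 + 3*ε)⁻¹ := by
      rw [Real.exp_neg]
      apply inv_anti₀ (by linarith)
      have := Real.add_one_le_exp (3*ε); linarith
    have h2 : (1 + 3*ε)⁻¹ < 1 - ε/4 := by
      rw [show (1 + 3*ε)⁻¹ = 1/(1+3*ε) by rw [one_div]]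
      rw [div_lt_iff₀ (by linarith)]
      nlinarith
    linarith
  rw [hden, ← hA]
  constructor <;> [linarith; linarith]
end

section
/- Suppose C > 0 and a real-valued function h on a punctured neighborhood of 1 satisfies (1/3)·Re((w-1)³) - C|w-1|⁴ ≤ h(w) ≤ (1/3)·Re((w-1)³) + C|w-1|⁴. Then there is ε₀ > 0 such that for all 0 < ε < ε₀, every w = 1 + r·e^{iθ} with 0 < r < ε^{1/3}/2 and 11π/12 < θ < 13π/12 satisfies -ε < h(w) < 0. -/
open Real in
/-- if h satisfies the two-sided bound
    (1/3)·Re((w-1)³) ± C|w-1|⁴ on a punctured neighborhood of 1, then for all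
    small ε, every sector point w = 1 + r·e^{iθ} satisfies -ε < h(w) < 0. -/
theorem stmt_11 (C : ℝ) (hC : C > 0) (U : Set ℂ) (hU : U ∈ nhds (1:ℂ))
    (h : ℂ → ℝ)
    (hbd : ∀ w ∈ U \ {1},
      (1/3) * (((w - 1)^3).re) - C * ‖w - 1‖^4 ≤ h w ∧
        h w ≤ (1/3) * (((w - 1)^3).re) + C * ‖w - 1‖^4) :
    ∃ ε₀ > (0:ℝ), ∀ ε : ℝ, 0 < ε → ε < ε₀ →
      ∀ r θ : ℝ, 0 < r → r < ε ^ ((1:ℝ)/3) / 2 →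
        11*π/12 < θ → θ < 13*π/12 →
        -ε < h (1 + r * Complex.exp (θ * Complex.I)) ∧
          h (1 + r * Complex.exp (θ * Complex.I)) < 0 := by
  obtain ⟨δ, hδ, hball⟩ := Metric.mem_nhds_iff.mp hU
  set m := min δ (1/(6*C)) with hmdef
  have hm0 : 0 < m := lt_min hδ (by positivity)
  refine ⟨m^3, by positivity, ?_⟩
  intro ε hε hεm r θ hr hrε hθ1 hθ2
  have hπ := Real.pi_pos
  -- ε^(1/3) < m
  have h13 : ε ^ ((1:ℝ)/3) < m := by
    have h1 := Real.rpow_lt_rpow hε.le hεm (by norm_num : (0:ℝ) < 1/3)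
    rw [← Real.rpow_natCast m 3, ← Real.rpow_mul hm0.le] at h1
    norm_num at h1
    exact h1
  have hrm : r < m / 2 := lt_of_lt_of_le hrε (by linarith)
  have hrδ : r < δ := lt_of_lt_of_le (by linarith) (min_le_left _ _)
  have hmC : m ≤ 1/(6*C) := min_le_right _ _
  have hCr : C * r < 1/12 := by
    have h1 : C * r < C * (m/2) := mul_lt_mul_of_pos_left hrm hC
    have h2 : C * (m/2) ≤ C * (1/(6*C)/2) := by
      apply mul_le_mul_of_nonneg_left _ hC.le; linarith
    have h3 : C * (1/(6*C)/2) = 1/12 := by field_simp; ring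
    linarith
  -- r^3 < ε/8
  have hcube : (ε ^ ((1:ℝ)/3))^3 = ε := by
    rw [← Real.rpow_natCast (ε ^ ((1:ℝ)/3)) 3, ← Real.rpow_mul hε.le]
    norm_num
  have hr3 : r^3 < ε/8 := by
    have h1 : r^3 < (ε ^ ((1:ℝ)/3) / 2)^3 := by
      apply pow_lt_pow_left₀ hrε hr.le; norm_num
    rw [div_pow, hcube] at h1
    linarith
  -- complex computations
  set z : ℂ := (r : ℂ) * Complex.exp ((θ:ℝ) * Complex.I) with hz
  have habs : ‖z‖ = r := by
    rw [hz, norm_mul, Complex.norm_real, Complex.norm_exp_ofReal_mul_I, mul_one,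
      Real.norm_eq_abs, abs_of_pos hr]
  have hz0 : z ≠ 0 := by
    intro h0
    rw [h0, norm_zero] at habs
    exact hr.ne habs
  have hmem : (1 + z) ∈ U \ {1} := by
    constructor
    · apply hball
      simp only [Metric.mem_ball, Complex.dist_eq, add_sub_cancel_left, habs]
      exact hrδ
    · simp only [Set.mem_singleton_iff]
      intro h0
      exact hz0 (by linear_combination h0 - 1)
  have hre : (z^3).re = r^3 * Real.cos (3*θ) := by
    have h1 : z^3 = ((r^3 : ℝ) : ℂ) * Complex.exp (((3*θ : ℝ) : ℂ) * Complex.I) := by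
      rw [hz, mul_pow, ← Complex.exp_nat_mul]
      push_cast
      ring_nf
    rw [h1, Complex.re_ofReal_mul, Complex.exp_ofReal_mul_I_re]
  -- cosine bound
  have hcos2 : Real.cos (3*θ) ≤ -(1/2) := by
    have e1 : (3*θ - 3*π) + π + 2*π = 3*θ := by ring
    have heq : Real.cos ((3*θ - 3*π) + π + 2*π) = -Real.cos (3*θ - 3*π) := by
      rw [Real.cos_add_two_pi, Real.cos_add_pi]
    rw [e1] at heq
    have habs' : |3*θ - 3*π| ≤ π/3 := by
      rw [abs_le]; constructor <;> linarith
    have h2 : Real.cos (π/3) ≤ Real.cos |3*θ - 3*π| :=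
      Real.cos_le_cos_of_nonneg_of_le_pi (abs_nonneg _) (by linarith) habs'
    rw [Real.cos_pi_div_three, Real.cos_abs] at h2
    linarith [heq]
  have hcos1 : -1 ≤ Real.cos (3*θ) := Real.neg_one_le_cos _
  obtain ⟨hlo, hhi⟩ := hbd (1 + z) hmem
  rw [add_sub_cancel_left, hre, habs] at hlo hhi
  have hr3pos : 0 < r^3 := by positivity
  constructor
  · -- lower bound
    have hCr4 : C * r^4 < (1/12) * (ε/8) := by
      calc C * r^4 = (C * r) * r^3 := by ring
        _ < (1/12) * (ε/8) := by
            apply mul_lt_mul' hCr.le hr3 hr3pos.le (by norm_num)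
    nlinarith [mul_le_mul_of_nonneg_left hcos1 (le_of_lt hr3pos)]
  · -- upper bound
    have key : (1/3) * (r^3 * Real.cos (3*θ)) + C * r^4 < 0 := by
      have h1 : (1/3) * (r^3 * Real.cos (3*θ)) ≤ (1/3) * (r^3 * (-(1/2))) := by
        apply mul_le_mul_of_nonneg_left _ (by norm_num)
        exact mul_le_mul_of_nonneg_left hcos2 hr3pos.le
      have h2 : C * r^4 = (C * r) * r^3 := by ring
      nlinarith
    linarith
end
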